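/- Let n ≥ 5 and δ ∈ ℂ. If [-,-] is a Lie bracket on μ₀ⁿ making (μ₀ⁿ, ·, [-,-]) a transposed δ-Poisson algebra, then (δ³ − 3δ² + 2δ) · (e₃ · [e₁, e₂]) = 0 in μ₀ⁿ. -/
import Mathlib


open Finset

/-- The null-filiform associative multiplication on `ℂⁿ = Fin n → ℂ`.
The basis vector `e_i` (1-based) corresponds to the coordinate `i - 1`, and
`e_i · e_j = e_{i+j}` if `i + j ≤ n`, and `0` otherwise. -/
noncomputable def nfMul (n : ℕ) (x y : Fin n → ℂ) : Fin n → ℂ :=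
  fun k => ∑ i : Fin n, ∑ j : Fin n,
    if (i : ℕ) + (j : ℕ) + 1 = (k : ℕ) then x i * y j else 0

/-- The 1-based basis vector `e i` of `ℂⁿ` (zero if `i` is out of range `1,…,n`). -/
noncomputable def nfE (n : ℕ) (i : ℕ) : Fin n → ℂ :=
  fun k => if (k : ℕ) + 1 = i then 1 else 0

/-- The coefficient of the basis vector `e i` (1-based) in `x`. -/
noncomputable def nfCoeff (n : ℕ) (x : Fin n → ℂ) (i : ℕ) : ℂ :=
  ∑ k : Fin n, if (k : ℕ) + 1 = i then x k else 0

/-- A Lie bracket (bilinear, alternating, satisfying the Jacobi identity)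
on a complex vector space. -/
structure LieBracketOn (L : Type*) [AddCommGroup L] [Module ℂ L] where
  br : L → L → L
  add_left : ∀ x y z, br (x + y) z = br x z + br y z
  smul_left : ∀ (c : ℂ) (x y : L), br (c • x) y = c • br x y
  add_right : ∀ x y z, br x (y + z) = br x y + br x z
  smul_right : ∀ (c : ℂ) (x y : L), br x (c • y) = c • br x y
  alt : ∀ x, br x x = 0
  jacobi : ∀ x y z, br (br x y) z + br (br y z) x + br (br z x) y = 0

/-- `(μ₀ⁿ, ·, [-,-])` is a transposed `δ`-Poisson algebra:
`δ • (z · [x,y]) = [z·x, y] + [x, z·y]`. -/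
noncomputable def IsTransposedPoisson (n : ℕ) (δ : ℂ) (B : LieBracketOn (Fin n → ℂ)) : Prop :=
  ∀ x y z, δ • nfMul n z (B.br x y) = B.br (nfMul n z x) y + B.br x (nfMul n z y)

/-- `(μ₀ⁿ, ·, [-,-])` is a `δ`-Poisson algebra:
`[x, y·z] = δ • ([x,y]·z + y·[x,z])`. -/
noncomputable def IsDeltaPoisson (n : ℕ) (δ : ℂ) (B : LieBracketOn (Fin n → ℂ)) : Prop :=
  ∀ x y z, B.br x (nfMul n y z) = δ • (nfMul n (B.br x y) z + nfMul n y (B.br x z))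

/-- The bracket of the transposed 0-Poisson algebra `TP₀(α₁,…,αₙ)` on `μ₀ⁿ`:
determined by `[e₁,e₂] = ∑_{t=1}^n αₜ eₜ` and `[eᵢ,eⱼ] = 0` for all other
pairs `i < j`. -/
noncomputable def brTP0 (n : ℕ) (α : ℕ → ℂ) (x y : Fin n → ℂ) : Fin n → ℂ :=
  (nfCoeff n x 1 * nfCoeff n y 2 - nfCoeff n x 2 * nfCoeff n y 1) •
    ∑ t ∈ Finset.Icc 1 n, α t • nfE n t

/-- The bracket of the transposed 1-Poisson algebra `TP₁(α₂,…,αₙ)` on `μ₀ⁿ`: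
determined by `[e₁,eᵢ] = ∑_{t=i}^n α_{t-i+2} eₜ` for `2 ≤ i ≤ n` and
`[eᵢ,eⱼ] = 0` for `2 ≤ i < j ≤ n`. -/
noncomputable def brTP1 (n : ℕ) (α : ℕ → ℂ) (x y : Fin n → ℂ) : Fin n → ℂ :=
  ∑ i ∈ Finset.Icc 2 n,
    (nfCoeff n x 1 * nfCoeff n y i - nfCoeff n x i * nfCoeff n y 1) •
      ∑ t ∈ Finset.Icc i n, α (t + 2 - i) • nfE n t

/-- The bracket of the transposed `δ`-Poisson algebra `TP_δ(a, b, c)`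
(`a = α_{n-2}`, `b = α_{n-1}`, `c = αₙ`) on `μ₀ⁿ`: determined by
`[e₁,e₂] = a e_{n-2} + b e_{n-1} + c eₙ`, `[e₁,e₃] = δ(a e_{n-1} + b eₙ)`,
`[e₂,e₃] = ((δ²-δ)/2) a eₙ`, `[e₁,e₄] = ((δ²+δ)/2) a eₙ`, and `[eᵢ,eⱼ] = 0`
for all other pairs `i < j`. -/
noncomputable def brTPd (n : ℕ) (δ a b c : ℂ) (x y : Fin n → ℂ) : Fin n → ℂ :=
  (nfCoeff n x 1 * nfCoeff n y 2 - nfCoeff n x 2 * nfCoeff n y 1) •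
      (a • nfE n (n-2) + b • nfE n (n-1) + c • nfE n n)
  + (nfCoeff n x 1 * nfCoeff n y 3 - nfCoeff n x 3 * nfCoeff n y 1) •
      (δ • (a • nfE n (n-1) + b • nfE n n))
  + (nfCoeff n x 2 * nfCoeff n y 3 - nfCoeff n x 3 * nfCoeff n y 2) •
      (((δ^2 - δ)/2 * a) • nfE n n)
  + (nfCoeff n x 1 * nfCoeff n y 4 - nfCoeff n x 4 * nfCoeff n y 1) •
      (((δ^2 + δ)/2 * a) • nfE n n)

/-- Two bracket structures on `μ₀ⁿ` are isomorphic (as transposed δ-Poisson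
algebras): there is a linear bijection preserving both `·` and `[-,-]`. -/
noncomputable def TPIso (n : ℕ) (B B' : (Fin n → ℂ) → (Fin n → ℂ) → (Fin n → ℂ)) : Prop :=
  ∃ φ : (Fin n → ℂ) ≃ₗ[ℂ] (Fin n → ℂ),
    (∀ x y, φ (nfMul n x y) = nfMul n (φ x) (φ y)) ∧
    ∀ x y, φ (B x y) = B' (φ x) (φ y)


lemma nfMul_nfE_apply (n a : ℕ) (ha : 1 ≤ a) (han : a ≤ n) (w : Fin n → ℂ) (k : Fin n) :
    nfMul n (nfE n a) w k =
      if a ≤ (k : ℕ) then w ⟨(k : ℕ) - a, lt_of_le_of_lt (Nat.sub_le _ _) k.2⟩ else 0 := by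
  classical
  unfold nfMul nfE
  rw [Finset.sum_eq_single (⟨a - 1, by omega⟩ : Fin n)]
  · by_cases h : a ≤ (k : ℕ)
    · rw [if_pos h, Finset.sum_eq_single (⟨(k : ℕ) - a, lt_of_le_of_lt (Nat.sub_le _ _) k.2⟩ : Fin n)]
      · rw [if_pos (by simp only [Fin.val_mk]; omega), if_pos (by simp only [Fin.val_mk]; omega),
          one_mul]
      · intro j _ hj
        rw [if_neg]
        have hj' : (j : ℕ) ≠ (k : ℕ) - a := fun hh => hj (Fin.ext hh)
        simp only [Fin.val_mk]
        omega
      · intro h'; exact absurd (Finset.mem_univ _) h'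
    · rw [if_neg h]
      apply Finset.sum_eq_zero
      intro j _
      rw [if_neg]
      simp only [Fin.val_mk]
      omega
  · intro i _ hi
    apply Finset.sum_eq_zero
    intro j _
    have hi' : (i : ℕ) ≠ a - 1 := fun hh => hi (Fin.ext hh)
    by_cases hc : (i : ℕ) + (j : ℕ) + 1 = (k : ℕ)
    · rw [if_pos hc, if_neg (by omega), zero_mul]
    · rw [if_neg hc]
  · intro h'; exact absurd (Finset.mem_univ _) h'

lemma nfE_mul_nfE (n a b : ℕ) (ha : 1 ≤ a) (hb : 1 ≤ b) (hab : a + b ≤ n) :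
    nfMul n (nfE n a) (nfE n b) = nfE n (a + b) := by
  funext k
  rw [nfMul_nfE_apply n a ha (by omega)]
  unfold nfE
  by_cases h1 : a ≤ (k : ℕ)
  · rw [if_pos h1]
    simp only [Fin.val_mk]
    by_cases h2 : (k : ℕ) - a + 1 = b
    · rw [if_pos h2, if_pos (by omega)]
    · rw [if_neg h2, if_neg (by omega)]
  · rw [if_neg h1, if_neg (by omega)]

lemma nfE_mul_assoc (n a b : ℕ) (ha : 1 ≤ a) (hb : 1 ≤ b) (hab : a + b ≤ n) (w : Fin n → ℂ) :
    nfMul n (nfE n a) (nfMul n (nfE n b) w) = nfMul n (nfE n (a + b)) w := by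
  funext k
  rw [nfMul_nfE_apply n a ha (by omega), nfMul_nfE_apply n (a+b) (by omega) hab]
  by_cases h1 : a ≤ (k : ℕ)
  · rw [if_pos h1, nfMul_nfE_apply n b hb (by omega)]
    simp only [Fin.val_mk]
    by_cases h2 : a + b ≤ (k : ℕ)
    · rw [if_pos (show b ≤ (k:ℕ) - a by omega), if_pos h2]
      congr 1
      exact Fin.ext (by simp only [Fin.val_mk]; omega)
    · rw [if_neg (show ¬ b ≤ (k:ℕ) - a by omega), if_neg h2]
  · rw [if_neg h1, if_neg (by omega)]

lemma nfMul_add_right (n : ℕ) (x y z : Fin n → ℂ) :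
    nfMul n x (y + z) = nfMul n x y + nfMul n x z := by
  funext k
  simp only [nfMul, Pi.add_apply, ← Finset.sum_add_distrib]
  refine Finset.sum_congr rfl fun i _ => Finset.sum_congr rfl fun j _ => ?_
  split_ifs <;> ring

lemma nfMul_smul_right (n : ℕ) (c : ℂ) (x y : Fin n → ℂ) :
    nfMul n x (c • y) = c • nfMul n x y := by
  funext k
  simp only [nfMul, Pi.smul_apply, smul_eq_mul, Finset.mul_sum]
  refine Finset.sum_congr rfl fun i _ => Finset.sum_congr rfl fun j _ => ?_
  split_ifs <;> ring

lemma nfMul_neg_right (n : ℕ) (x y : Fin n → ℂ) :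
    nfMul n x (-y) = -nfMul n x y := by
  funext k
  simp only [nfMul, Pi.neg_apply, ← Finset.sum_neg_distrib]
  refine Finset.sum_congr rfl fun i _ => Finset.sum_congr rfl fun j _ => ?_
  split_ifs <;> ring

lemma LieBracketOn.anti {L : Type*} [AddCommGroup L] [Module ℂ L]
    (B : LieBracketOn L) (x y : L) : B.br y x = -B.br x y := by
  have h := B.alt (x + y)
  rw [B.add_left, B.add_right, B.add_right, B.alt, B.alt, zero_add, add_zero] at h
  exact eq_neg_of_add_eq_zero_right h

/-- for `n ≥ 5`, any transposed `δ`-Poisson structure on `μ₀ⁿ`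
satisfies `(δ³ - 3δ² + 2δ) • (e₃ · [e₁,e₂]) = 0`. -/
theorem stmt_1 (n : ℕ) (hn : 5 ≤ n) (δ : ℂ)
    (B : LieBracketOn (Fin n → ℂ)) (hB : IsTransposedPoisson n δ B) :
    (δ^3 - 3*δ^2 + 2*δ) • nfMul n (nfE n 3) (B.br (nfE n 1) (nfE n 2)) = 0 := by
  have m11 : nfMul n (nfE n 1) (nfE n 1) = nfE n 2 := by
    simpa using nfE_mul_nfE n 1 1 (by norm_num) (by norm_num) (by omega)
  have m12 : nfMul n (nfE n 1) (nfE n 2) = nfE n 3 := by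
    simpa using nfE_mul_nfE n 1 2 (by norm_num) (by norm_num) (by omega)
  have m13 : nfMul n (nfE n 1) (nfE n 3) = nfE n 4 := by
    simpa using nfE_mul_nfE n 1 3 (by norm_num) (by norm_num) (by omega)
  have m21 : nfMul n (nfE n 2) (nfE n 1) = nfE n 3 := by
    simpa using nfE_mul_nfE n 2 1 (by norm_num) (by norm_num) (by omega)
  have m22 : nfMul n (nfE n 2) (nfE n 2) = nfE n 4 := by
    simpa using nfE_mul_nfE n 2 2 (by norm_num) (by norm_num) (by omega)
  have m23 : nfMul n (nfE n 2) (nfE n 3) = nfE n 5 := by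
    simpa using nfE_mul_nfE n 2 3 (by norm_num) (by norm_num) (by omega)
  have m31 : nfMul n (nfE n 3) (nfE n 1) = nfE n 4 := by
    simpa using nfE_mul_nfE n 3 1 (by norm_num) (by norm_num) (by omega)
  have m32 : nfMul n (nfE n 3) (nfE n 2) = nfE n 5 := by
    simpa using nfE_mul_nfE n 3 2 (by norm_num) (by norm_num) (by omega)
  have a11 : ∀ w, nfMul n (nfE n 1) (nfMul n (nfE n 1) w) = nfMul n (nfE n 2) w := fun w => by
    simpa using nfE_mul_assoc n 1 1 (by norm_num) (by norm_num) (by omega) w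
  have a12 : ∀ w, nfMul n (nfE n 1) (nfMul n (nfE n 2) w) = nfMul n (nfE n 3) w := fun w => by
    simpa using nfE_mul_assoc n 1 2 (by norm_num) (by norm_num) (by omega) w
  have a21 : ∀ w, nfMul n (nfE n 2) (nfMul n (nfE n 1) w) = nfMul n (nfE n 3) w := fun w => by
    simpa using nfE_mul_assoc n 2 1 (by norm_num) (by norm_num) (by omega) w
  have hi : B.br (nfE n 1) (nfE n 3) = δ • nfMul n (nfE n 1) (B.br (nfE n 1) (nfE n 2)) := by
    have h := hB (nfE n 1) (nfE n 2) (nfE n 1)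
    rw [m11, m12, B.alt, zero_add] at h
    exact h.symm
  have hii : δ • (δ • nfMul n (nfE n 2) (B.br (nfE n 1) (nfE n 2))) =
      B.br (nfE n 2) (nfE n 3) + B.br (nfE n 1) (nfE n 4) := by
    have h := hB (nfE n 1) (nfE n 3) (nfE n 1)
    rw [m11, m13, hi, nfMul_smul_right, a11] at h
    exact h
  have hiii : δ • nfMul n (nfE n 2) (B.br (nfE n 1) (nfE n 2)) =
      -B.br (nfE n 2) (nfE n 3) + B.br (nfE n 1) (nfE n 4) := by
    have h := hB (nfE n 1) (nfE n 2) (nfE n 2)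
    rw [m21, m22, B.anti (nfE n 2) (nfE n 3)] at h
    exact h
  have hiv : B.br (nfE n 2) (nfE n 4) = δ • nfMul n (nfE n 1) (B.br (nfE n 2) (nfE n 3)) := by
    have h := hB (nfE n 2) (nfE n 3) (nfE n 1)
    rw [m12, m13, B.alt, zero_add] at h
    exact h.symm
  have hv : B.br (nfE n 1) (nfE n 5) =
      δ • (δ • nfMul n (nfE n 3) (B.br (nfE n 1) (nfE n 2))) := by
    have h := hB (nfE n 1) (nfE n 3) (nfE n 2)
    rw [m21, m23, B.alt, zero_add, hi, nfMul_smul_right, a21] at h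
    exact h.symm
  have hvi : δ • nfMul n (nfE n 3) (B.br (nfE n 1) (nfE n 2)) =
      -B.br (nfE n 2) (nfE n 4) + B.br (nfE n 1) (nfE n 5) := by
    have h := hB (nfE n 1) (nfE n 2) (nfE n 3)
    rw [m31, m32, B.anti (nfE n 2) (nfE n 4)] at h
    exact h
  have mh2 : δ • (δ • nfMul n (nfE n 3) (B.br (nfE n 1) (nfE n 2))) =
      nfMul n (nfE n 1) (B.br (nfE n 2) (nfE n 3)) +
        nfMul n (nfE n 1) (B.br (nfE n 1) (nfE n 4)) := by
    have h := congrArg (nfMul n (nfE n 1)) hii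
    rw [nfMul_smul_right, nfMul_smul_right, a12, nfMul_add_right] at h
    exact h
  have mh3 : δ • nfMul n (nfE n 3) (B.br (nfE n 1) (nfE n 2)) =
      -nfMul n (nfE n 1) (B.br (nfE n 2) (nfE n 3)) +
        nfMul n (nfE n 1) (B.br (nfE n 1) (nfE n 4)) := by
    have h := congrArg (nfMul n (nfE n 1)) hiii
    rw [nfMul_smul_right, a12, nfMul_add_right, nfMul_neg_right] at h
    exact h
  linear_combination (norm := module) (2:ℂ) • hvi + (2:ℂ) • hv - (2:ℂ) • hiv +
    δ • mh2 - δ • mh3
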